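/- Let g : ℝ_{>0} → ℝ be convex and suppose a^3/100 ≤ g(a) ≤ 8a^3 for all a ≥ 4. Then for all a ≥ 4 and all δ ∈ (0,1): g(a) − g(a(1−δ)) ≤ g(a(1+δ)) − g(a) ≤ 10^4 · δ · g(a). -/
import Mathlib


/-- For a convex `g` on the positive reals with `a^3/100 ≤ g a ≤ 8 a^3` for `a ≥ 4`,
for all `a ≥ 4` and `δ ∈ (0,1)`:
`g a − g (a(1−δ)) ≤ g (a(1+δ)) − g a ≤ 10^4 δ g a`. -/
theorem convex_increment_bounds (g : ℝ → ℝ)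
    (hconv : ConvexOn ℝ (Set.Ioi (0 : ℝ)) g)
    (hbound : ∀ a : ℝ, 4 ≤ a → a ^ 3 / 100 ≤ g a ∧ g a ≤ 8 * a ^ 3) :
    ∀ a δ : ℝ, 4 ≤ a → 0 < δ → δ < 1 →
      g a - g (a * (1 - δ)) ≤ g (a * (1 + δ)) - g a ∧
      g (a * (1 + δ)) - g a ≤ 10 ^ 4 * δ * g a := by
  intro a δ ha hδ0 hδ1
  have ha0 : (0:ℝ) < a := by linarith
  have hmem1 : a * (1 - δ) ∈ Set.Ioi (0:ℝ) := by
    have : (0:ℝ) < 1 - δ := by linarith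
    exact Set.mem_Ioi.mpr (mul_pos ha0 this)
  have hmem2 : a * (1 + δ) ∈ Set.Ioi (0:ℝ) := by
    have : (0:ℝ) < 1 + δ := by linarith
    exact Set.mem_Ioi.mpr (mul_pos ha0 this)
  have hmema : a ∈ Set.Ioi (0:ℝ) := Set.mem_Ioi.mpr ha0
  have hmem2a : 2 * a ∈ Set.Ioi (0:ℝ) := Set.mem_Ioi.mpr (by positivity)
  constructor
  · -- midpoint convexity
    have h := hconv.2 hmem1 hmem2 (by norm_num : (0:ℝ) ≤ 1/2)
      (by norm_num : (0:ℝ) ≤ 1/2) (by norm_num)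
    have heq : (1/2 : ℝ) • (a * (1 - δ)) + (1/2 : ℝ) • (a * (1 + δ)) = a := by
      simp only [smul_eq_mul]; ring
    rw [heq] at h
    simp only [smul_eq_mul] at h
    linarith
  · have h := hconv.2 hmema hmem2a (by linarith : (0:ℝ) ≤ 1 - δ)
      (le_of_lt hδ0) (by ring)
    have heq : (1 - δ : ℝ) • a + δ • (2 * a) = a * (1 + δ) := by
      simp only [smul_eq_mul]; ring
    rw [heq] at h
    simp only [smul_eq_mul] at h
    have hga := hbound a ha
    have hg2a := hbound (2*a) (by linarith)
    have hgapos : (0:ℝ) < g a := by nlinarith [hga.1, pow_pos ha0 3]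
    -- g(2a) ≤ 64 a^3 ≤ 6400 g a
    have h64 : g (2*a) ≤ 6400 * g a := by nlinarith [hg2a.2, hga.1]
    nlinarith [mul_le_mul_of_nonneg_left h64 (le_of_lt hδ0)]
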